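/- arXiv:0801.0731 — 2 statements merged into one kernel-verified Lean document; each statement's English description precedes it below -/
import Mathlib

section
/- Let A be a Banach algebra. If A is approximately biflat and has an approximate identity, then A is pseudo-amenable. -/
noncomputable section

open Filter Topology ComplexConjugate

universe u

/-- A realization of the (Banach-space) projective tensor product `E ⊗̂ F` of two complex
Banach spaces: a Banach space `X` with a contractive bilinear map `tmul` whose range spans a
dense subspace and which enjoys the universal property of the projective tensor product. -/
structure ProjTensor (E : Type u) (F : Type u) [NormedAddCommGroup E] [NormedSpace ℂ E]
    [NormedAddCommGroup F] [NormedSpace ℂ F] : Type (u + 1) where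
  X : Type u
  [instNormed : NormedAddCommGroup X]
  [instSpace : NormedSpace ℂ X]
  [instComplete : CompleteSpace X]
  tmul : E →L[ℂ] F →L[ℂ] X
  norm_tmul_le : ∀ (e : E) (f : F), ‖tmul e f‖ ≤ ‖e‖ * ‖f‖
  dense_span : Dense (↑(Submodule.span ℂ (Set.range fun p : E × F => tmul p.1 p.2)) : Set X)
  lift : ∀ (W : Type u) [NormedAddCommGroup W] [NormedSpace ℂ W] [CompleteSpace W]
      (b : E →L[ℂ] F →L[ℂ] W),
      ∃ L : X →L[ℂ] W, ‖L‖ ≤ ‖b‖ ∧ ∀ (e : E) (f : F), L (tmul e f) = b e f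

attribute [instance] ProjTensor.instNormed ProjTensor.instSpace ProjTensor.instComplete

section BanachAlgebra

variable (A : Type u) [NonUnitalNormedRing A] [NormedSpace ℂ A]
  [IsScalarTower ℂ A A] [SMulCommClass ℂ A A] [CompleteSpace A]

/-- Left multiplication `b ↦ a * b` as a continuous linear map. -/
def lmulOp (a : A) : A →L[ℂ] A := ContinuousLinearMap.mul ℂ A a

/-- Right multiplication `b ↦ b * a` as a continuous linear map. -/
def rmulOp (a : A) : A →L[ℂ] A := (ContinuousLinearMap.mul ℂ A).flip a

/-- A realization of the projective tensor square `A ⊗̂ A` of a Banach algebra `A`, together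
with its canonical `A`-bimodule actions `a · (b ⊗ c) = (a*b) ⊗ c`, `(b ⊗ c) · a = b ⊗ (c*a)`,
and the multiplication map `π : A ⊗̂ A → A`, `π (b ⊗ c) = b * c`. -/
structure TensorSquare extends ProjTensor A A where
  lsmul : A → (X →L[ℂ] X)
  rsmul : A → (X →L[ℂ] X)
  lsmul_tmul : ∀ a b c : A, lsmul a (tmul b c) = tmul (a * b) c
  rsmul_tmul : ∀ a b c : A, rsmul a (tmul b c) = tmul b (c * a)
  lsmul_norm_le : ∀ (a : A) (m : X), ‖lsmul a m‖ ≤ ‖a‖ * ‖m‖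
  rsmul_norm_le : ∀ (a : A) (m : X), ‖rsmul a m‖ ≤ ‖a‖ * ‖m‖
  mulMap : X →L[ℂ] A
  mulMap_tmul : ∀ a b : A, mulMap (tmul a b) = a * b

variable {A}

namespace TensorSquare

variable (ts : TensorSquare A)

/-- The adjoint `π* : A* → (A ⊗̂ A)*` of the multiplication map. -/
def piStar (φ : A →L[ℂ] ℂ) : ts.X →L[ℂ] ℂ := φ.comp ts.mulMap

/-- A bounded linear map `θ : (A ⊗̂ A)* → A*` is an `A`-bimodule morphism (for the canonical
dual bimodule actions `⟨a·ψ, m⟩ = ⟨ψ, m·a⟩`, `⟨ψ·a, m⟩ = ⟨ψ, a·m⟩` on `(A ⊗̂ A)*` and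
`⟨a·φ, b⟩ = ⟨φ, b*a⟩`, `⟨φ·a, b⟩ = ⟨φ, a*b⟩` on `A*`). -/
def IsBimoduleMorphism (θ : (ts.X →L[ℂ] ℂ) →L[ℂ] (A →L[ℂ] ℂ)) : Prop :=
  ∀ (a : A) (ψ : ts.X →L[ℂ] ℂ),
    θ (ψ.comp (ts.rsmul a)) = (θ ψ).comp (rmulOp A a) ∧
    θ (ψ.comp (ts.lsmul a)) = (θ ψ).comp (lmulOp A a)

/-- `A` is biflat: there is a bounded `A`-bimodule morphism `θ : (A ⊗̂ A)* → A*` with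
`θ ∘ π* = id`. -/
def Biflat : Prop :=
  ∃ θ : (ts.X →L[ℂ] ℂ) →L[ℂ] (A →L[ℂ] ℂ),
    ts.IsBimoduleMorphism θ ∧ ∀ φ : A →L[ℂ] ℂ, θ (ts.piStar φ) = φ

/-- `A` is approximately biflat: there is a net `θ_δ : (A ⊗̂ A)* → A*` of bounded
`A`-bimodule morphisms with `θ_δ ∘ π* → id_{A*}` in the weak* operator topology. -/
def ApproximatelyBiflat : Prop :=
  ∃ (ι : Type u) (ne : Nonempty ι) (sl : SemilatticeSup ι)
    (θ : ι → ((ts.X →L[ℂ] ℂ) →L[ℂ] (A →L[ℂ] ℂ))),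
    letI := ne
    letI := sl
    (∀ i, ts.IsBimoduleMorphism (θ i)) ∧
      ∀ (a : A) (φ : A →L[ℂ] ℂ),
        Tendsto (fun i => θ i (ts.piStar φ) a) atTop (𝓝 (φ a))

/-- `A` is pseudo-amenable: there is a net `(m_α)` in `A ⊗̂ A` with
`a · m_α - m_α · a → 0` and `π(m_α) a → a` in norm for every `a ∈ A`. -/
def PseudoAmenable : Prop :=
  ∃ (ι : Type u) (ne : Nonempty ι) (sl : SemilatticeSup ι) (m : ι → ts.X),
    letI := ne
    letI := sl
    (∀ a : A, Tendsto (fun i => ts.lsmul a (m i) - ts.rsmul a (m i)) atTop (𝓝 0)) ∧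
      ∀ a : A, Tendsto (fun i => ts.mulMap (m i) * a) atTop (𝓝 a)

/-- `A` is pseudo-contractible: there is a net `(m_α)` in `A ⊗̂ A` with
`a · m_α = m_α · a` for all `a, α`, and `π(m_α) a → a` in norm for every `a ∈ A`. -/
def PseudoContractible : Prop :=
  ∃ (ι : Type u) (ne : Nonempty ι) (sl : SemilatticeSup ι) (m : ι → ts.X),
    letI := ne
    letI := sl
    (∀ (i : ι) (a : A), ts.lsmul a (m i) = ts.rsmul a (m i)) ∧
      ∀ a : A, Tendsto (fun i => ts.mulMap (m i) * a) atTop (𝓝 a)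

end TensorSquare

end BanachAlgebra

/-- A Banach algebra has a (two-sided, not necessarily bounded) approximate identity. -/
def HasApproximateIdentity (B : Type u) [NonUnitalNormedRing B] : Prop :=
  ∃ (ι : Type u) (ne : Nonempty ι) (sl : SemilatticeSup ι) (e : ι → B),
    letI := ne
    letI := sl
    ∀ b : B, Tendsto (fun i => e i * b) atTop (𝓝 b) ∧ Tendsto (fun i => b * e i) atTop (𝓝 b)

/-- A Banach algebra has a central approximate identity. -/
def HasCentralApproximateIdentity (B : Type u) [NonUnitalNormedRing B] : Prop :=
  ∃ (ι : Type u) (ne : Nonempty ι) (sl : SemilatticeSup ι) (e : ι → B),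
    letI := ne
    letI := sl
    (∀ (i : ι) (b : B), e i * b = b * e i) ∧
      ∀ b : B, Tendsto (fun i => e i * b) atTop (𝓝 b) ∧ Tendsto (fun i => b * e i) atTop (𝓝 b)

/-! ### Auxiliary lemmas -/

section Aux

set_option linter.unusedSectionVars false

variable {A : Type u} [NonUnitalNormedRing A] [NormedSpace ℂ A]
  [IsScalarTower ℂ A A] [SMulCommClass ℂ A A] [CompleteSpace A]

lemma lmulOp_apply' (a x : A) : lmulOp A a x = a * x := rfl

lemma rmulOp_apply' (a x : A) : rmulOp A a x = x * a := rfl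

namespace TensorSquare

variable (ts : TensorSquare A)

lemma clm_ext_tmul {W : Type u} [NormedAddCommGroup W] [NormedSpace ℂ W]
    {f g : ts.X →L[ℂ] W} (h : ∀ b c : A, f (ts.tmul b c) = g (ts.tmul b c)) : f = g := by
  have heq : Set.EqOn f g
      (↑(Submodule.span ℂ (Set.range fun p : A × A => ts.tmul p.1 p.2)) : Set ts.X) := by
    intro x hx
    induction hx using Submodule.span_induction with
    | mem x hx => obtain ⟨p, rfl⟩ := hx; exact h p.1 p.2
    | zero => simp
    | add x y hx hy ihx ihy => simp only [map_add, ihx, ihy]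
    | smul c x hx ih => simp only [map_smul, ih]
  have hfg := Continuous.ext_on ts.dense_span f.continuous g.continuous heq
  exact ContinuousLinearMap.ext fun x => congrFun hfg x

lemma mulMap_rsmul (a : A) : ts.mulMap.comp (ts.rsmul a) = (rmulOp A a).comp ts.mulMap := by
  refine ts.clm_ext_tmul fun b c => ?_
  simp [ts.mulMap_tmul, ts.rsmul_tmul, rmulOp_apply', mul_assoc]

lemma mulMap_rsmul_apply (a : A) (m : ts.X) : ts.mulMap (ts.rsmul a m) = ts.mulMap m * a := by
  have h := congrArg (fun (L : ts.X →L[ℂ] A) => L m) (ts.mulMap_rsmul a)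
  simpa [rmulOp_apply'] using h

end TensorSquare

end Aux

section Core

set_option linter.unusedSectionVars false

variable {A : Type u} [NonUnitalNormedRing A] [NormedSpace ℂ A]
  [IsScalarTower ℂ A A] [SMulCommClass ℂ A A] [CompleteSpace A]

namespace TensorSquare

variable (ts : TensorSquare A)

lemma sum_eq_zero_of_system (hbf : ts.ApproximatelyBiflat) (hai : HasApproximateIdentity A)
    {ι : Type u} [Fintype ι] (aa : ι → A) (ψ : ι → (ts.X →L[ℂ] ℂ)) (φ : ι → (A →L[ℂ] ℂ))
    (H : ∀ m : ts.X, (∑ k, ψ k (ts.lsmul (aa k) m - ts.rsmul (aa k) m))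
        + (∑ k, φ k (ts.mulMap m * aa k)) = 0) :
    (∑ k, φ k (aa k)) = 0 := by
  obtain ⟨ι₁, ne₁, sl₁, θ, hbim, hconv⟩ := hbf
  obtain ⟨ι₀, ne₀, sl₀, e, he⟩ := hai
  letI := ne₁; letI := sl₁; letI := ne₀; letI := sl₀
  set χ : A →L[ℂ] ℂ := ∑ k, (φ k).comp (rmulOp A (aa k)) with hχ
  set Ξ : ts.X →L[ℂ] ℂ :=
    ∑ k, ((ψ k).comp (ts.lsmul (aa k)) - (ψ k).comp (ts.rsmul (aa k))) with hΞ
  have hXi0 : Ξ + ts.piStar χ = 0 := by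
    ext m
    have hm := H m
    simp only [hΞ, hχ, ContinuousLinearMap.add_apply, ContinuousLinearMap.sum_apply,
      ContinuousLinearMap.sub_apply, ContinuousLinearMap.coe_comp', Function.comp_apply,
      ContinuousLinearMap.zero_apply, TensorSquare.piStar, rmulOp_apply']
    simp only [map_sub] at hm
    simpa using hm
  have hpich : ts.piStar χ = ∑ k, (ts.piStar (φ k)).comp (ts.rsmul (aa k)) := by
    ext m
    simp only [hχ, TensorSquare.piStar, ContinuousLinearMap.sum_apply,
      ContinuousLinearMap.coe_comp', Function.comp_apply, rmulOp_apply',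
      ts.mulMap_rsmul_apply]
  have key : ∀ δ : ι₁, (∑ k, (θ δ) (ts.piStar (φ k)) (aa k)) = 0 := by
    intro δ
    have h0 : (θ δ) Ξ + (θ δ) (ts.piStar χ) = 0 := by rw [← map_add, hXi0, map_zero]
    have e1 : (θ δ) Ξ = ∑ k, (((θ δ) (ψ k)).comp (lmulOp A (aa k))
        - ((θ δ) (ψ k)).comp (rmulOp A (aa k))) := by
      rw [hΞ, map_sum]
      exact Finset.sum_congr rfl fun k _ => by
        rw [map_sub, (hbim δ (aa k) (ψ k)).2, (hbim δ (aa k) (ψ k)).1]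
    have e2 : (θ δ) (ts.piStar χ)
        = ∑ k, (((θ δ) (ts.piStar (φ k))).comp (rmulOp A (aa k))) := by
      rw [hpich, map_sum]
      exact Finset.sum_congr rfl fun k _ => (hbim δ (aa k) (ts.piStar (φ k))).1
    have hev : ∀ i : ι₀,
        (∑ k, ((θ δ) (ψ k) (aa k * e i) - (θ δ) (ψ k) (e i * aa k)))
          + (∑ k, (θ δ) (ts.piStar (φ k)) (e i * aa k)) = 0 := by
      intro i
      have hh := congrArg (fun L : A →L[ℂ] ℂ => L (e i)) h0
      simp only [e1, e2, ContinuousLinearMap.add_apply, ContinuousLinearMap.sum_apply,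
        ContinuousLinearMap.sub_apply, ContinuousLinearMap.coe_comp', Function.comp_apply,
        lmulOp_apply', rmulOp_apply', ContinuousLinearMap.zero_apply] at hh
      exact hh
    have hT1 : Tendsto (fun i : ι₀ =>
        ∑ k, ((θ δ) (ψ k) (aa k * e i) - (θ δ) (ψ k) (e i * aa k))) atTop (𝓝 0) := by
      have h := tendsto_finset_sum (Finset.univ : Finset ι) (fun k _ =>
        Tendsto.sub
          ((((θ δ) (ψ k)).continuous.tendsto (aa k)).comp (he (aa k)).2)
          ((((θ δ) (ψ k)).continuous.tendsto (aa k)).comp (he (aa k)).1))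
      simpa using h
    have hT2 : Tendsto (fun i : ι₀ => ∑ k, (θ δ) (ts.piStar (φ k)) (e i * aa k)) atTop
        (𝓝 (∑ k, (θ δ) (ts.piStar (φ k)) (aa k))) :=
      tendsto_finset_sum (Finset.univ : Finset ι) (fun k _ =>
        ((((θ δ) (ts.piStar (φ k))).continuous.tendsto (aa k)).comp (he (aa k)).1))
    have hT := hT1.add hT2
    rw [zero_add] at hT
    have hfe : (fun i : ι₀ =>
        (∑ k, ((θ δ) (ψ k) (aa k * e i) - (θ δ) (ψ k) (e i * aa k)))
          + (∑ k, (θ δ) (ts.piStar (φ k)) (e i * aa k))) = fun _ => (0:ℂ) := funext hev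
    rw [hfe] at hT
    haveI : (atTop : Filter ι₀).NeBot := atTop_neBot
    exact tendsto_nhds_unique hT tendsto_const_nhds
  have hfin : Tendsto (fun δ : ι₁ => ∑ k, (θ δ) (ts.piStar (φ k)) (aa k)) atTop
      (𝓝 (∑ k, φ k (aa k))) :=
    tendsto_finset_sum (Finset.univ : Finset ι) (fun k _ => hconv (aa k) (φ k))
  have hke : (fun δ : ι₁ => ∑ k, (θ δ) (ts.piStar (φ k)) (aa k)) = fun _ => (0:ℂ) :=
    funext key
  rw [hke] at hfin
  haveI : (atTop : Filter ι₁).NeBot := atTop_neBot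
  exact tendsto_nhds_unique hfin tendsto_const_nhds

end TensorSquare

end Core

section Approx

set_option linter.unusedSectionVars false
set_option maxHeartbeats 1000000

variable {A : Type u} [NonUnitalNormedRing A] [NormedSpace ℂ A]
  [IsScalarTower ℂ A A] [SMulCommClass ℂ A A] [CompleteSpace A]

namespace TensorSquare

variable (ts : TensorSquare A)

lemma exists_approx (hbf : ts.ApproximatelyBiflat) (hai : HasApproximateIdentity A)
    (F : Finset A) {ε : ℝ} (hε : 0 < ε) :
    ∃ m : ts.X, ∀ a ∈ F,
      ‖ts.lsmul a m - ts.rsmul a m‖ ≤ ε ∧ ‖ts.mulMap m * a - a‖ ≤ ε := by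
  classical
  set S : ts.X →L[ℂ] (({x // x ∈ F} → ts.X) × ({x // x ∈ F} → A)) :=
    (ContinuousLinearMap.pi fun a : {x // x ∈ F} => ts.lsmul (a : A) - ts.rsmul (a : A)).prod
      (ContinuousLinearMap.pi fun a : {x // x ∈ F} =>
        (rmulOp A (a : A)).comp ts.mulMap) with hS
  set t : ({x // x ∈ F} → ts.X) × ({x // x ∈ F} → A) :=
    (0, fun a : {x // x ∈ F} => (a : A)) with hts
  have hS1 : ∀ (m : ts.X) (a : {x // x ∈ F}),
      (S m).1 a = ts.lsmul (a : A) m - ts.rsmul (a : A) m := fun m a => rfl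
  have hS2 : ∀ (m : ts.X) (a : {x // x ∈ F}),
      (S m).2 a = ts.mulMap m * (a : A) := fun m a => rfl
  suffices ht : t ∈ closure (Set.range S) by
    rw [Metric.mem_closure_iff] at ht
    obtain ⟨z, hzr, hz⟩ := ht ε hε
    obtain ⟨m, rfl⟩ := hzr
    refine ⟨m, fun a ha => ?_⟩
    rw [dist_eq_norm] at hz
    constructor
    · have h1 : ‖(t - S m).1 ⟨a, ha⟩‖ ≤ ‖t - S m‖ :=
        le_trans (norm_le_pi_norm (t - S m).1 ⟨a, ha⟩) (norm_fst_le (t - S m))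
      have h2 : (t - S m).1 ⟨a, ha⟩ = -(ts.lsmul a m - ts.rsmul a m) := by
        simp [hS1, hts]
      rw [h2, norm_neg] at h1
      exact le_of_lt (lt_of_le_of_lt h1 hz)
    · have h1 : ‖(t - S m).2 ⟨a, ha⟩‖ ≤ ‖t - S m‖ :=
        le_trans (norm_le_pi_norm (t - S m).2 ⟨a, ha⟩) (norm_snd_le (t - S m))
      have h2 : (t - S m).2 ⟨a, ha⟩ = a - ts.mulMap m * a := by
        simp [hS2, hts]
      rw [h2] at h1
      rw [← norm_sub_rev]
      exact le_of_lt (lt_of_le_of_lt h1 hz)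
  by_contra hcl
  have hconvex : Convex ℝ (Set.range S) := by
    rintro x ⟨mx, rfl⟩ y ⟨my, rfl⟩ p q hp hq hpq
    refine ⟨p • mx + q • my, ?_⟩
    rw [map_add, S.map_smul_of_tower, S.map_smul_of_tower]
  obtain ⟨f, u, hfu, hut⟩ :=
    geometric_hahn_banach_closed_point hconvex.closure isClosed_closure hcl
  have hu0 : 0 < u := by
    have h0 : f 0 < u := hfu 0 (subset_closure ⟨0, map_zero S⟩)
    simpa using h0
  have hf0 : ∀ m : ts.X, f (S m) = 0 := by
    intro m
    by_contra hne
    have hz : ∀ n : ℤ, (n : ℝ) * f (S m) < u := by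
      intro n
      have hmem := hfu _ (subset_closure ⟨n • m, rfl⟩)
      rwa [map_zsmul, map_zsmul, zsmul_eq_mul] at hmem
    obtain ⟨k, hk⟩ := exists_nat_gt (|u| / |f (S m)|)
    have hcpos : 0 < |f (S m)| := abs_pos.mpr hne
    have hklt : |u| < (k : ℝ) * |f (S m)| := by
      rw [div_lt_iff₀ hcpos] at hk; linarith
    rcases lt_or_gt_of_ne hne with hneg | hpos
    · have h1 := hz (-(k : ℤ))
      rw [abs_of_neg hneg] at hklt
      have h2 : ((-(k : ℤ) : ℤ) : ℝ) * f (S m) = (k : ℝ) * (-f (S m)) := by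
        push_cast; ring
      rw [h2] at h1
      linarith [le_abs_self u]
    · have h1 := hz (k : ℤ)
      rw [abs_of_pos hpos] at hklt
      have h2 : (((k : ℤ) : ℤ) : ℝ) * f (S m) = (k : ℝ) * f (S m) := by push_cast; ring
      push_cast at h1
      linarith [le_abs_self u]
  -- the complex functional
  set L : (({x // x ∈ F} → ts.X) × ({x // x ∈ F} → A)) →L[ℂ] ℂ := f.extendTo𝕜' with hL
  have hL0 : ∀ m : ts.X, L (S m) = 0 := by
    intro m
    rw [hL, ContinuousLinearMap.extendTo𝕜', ContinuousLinearMap.extendTo𝕜'_apply]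
    have h2 : (RCLike.I : ℂ) • S m = S ((RCLike.I : ℂ) • m) := (map_smul S _ _).symm
    rw [hf0 m, h2, hf0]
    simp
  have hret : (L t).re = f t := by
    rw [hL, ContinuousLinearMap.extendTo𝕜', ContinuousLinearMap.extendTo𝕜'_apply]
    simp [RCLike.I_to_complex]
  -- coordinate inclusions
  set j1 : {x // x ∈ F} → (ts.X →L[ℂ] (({x // x ∈ F} → ts.X) × ({x // x ∈ F} → A))) :=
    fun a => (ContinuousLinearMap.inl ℂ _ _).comp
      (ContinuousLinearMap.pi fun b : {x // x ∈ F} =>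
        if b = a then ContinuousLinearMap.id ℂ ts.X else 0) with hj1def
  set j2 : {x // x ∈ F} → (A →L[ℂ] (({x // x ∈ F} → ts.X) × ({x // x ∈ F} → A))) :=
    fun a => (ContinuousLinearMap.inr ℂ _ _).comp
      (ContinuousLinearMap.pi fun b : {x // x ∈ F} =>
        if b = a then ContinuousLinearMap.id ℂ A else 0) with hj2def
  have hj1 : ∀ (a : {x // x ∈ F}) (x : ts.X), j1 a x = ((Pi.single a x : {x // x ∈ F} → ts.X), 0) := by
    intro a x
    rw [hj1def]
    simp only [ContinuousLinearMap.coe_comp', Function.comp_apply,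
      ContinuousLinearMap.inl_apply]
    congr 1
    funext b
    rw [ContinuousLinearMap.pi_apply, Pi.single_apply]
    split_ifs <;> simp
  have hj2 : ∀ (a : {x // x ∈ F}) (x : A), j2 a x = (0, (Pi.single a x : {x // x ∈ F} → A)) := by
    intro a x
    rw [hj2def]
    simp only [ContinuousLinearMap.coe_comp', Function.comp_apply,
      ContinuousLinearMap.inr_apply]
    congr 1
    funext b
    rw [ContinuousLinearMap.pi_apply, Pi.single_apply]
    split_ifs <;> simp
  have hdec : ∀ z : (({x // x ∈ F} → ts.X) × ({x // x ∈ F} → A)),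
      L z = (∑ a : {x // x ∈ F}, L (j1 a (z.1 a)))
        + (∑ a : {x // x ∈ F}, L (j2 a (z.2 a))) := by
    intro z
    have h1 : (∑ a : {x // x ∈ F}, j1 a (z.1 a)) = (z.1, (0 : {x // x ∈ F} → A)) := by
      rw [show (∑ a : {x // x ∈ F}, j1 a (z.1 a))
          = ∑ a : {x // x ∈ F}, ((Pi.single a (z.1 a) : {x // x ∈ F} → ts.X), (0 : {x // x ∈ F} → A)) from
        Finset.sum_congr rfl fun a _ => hj1 a (z.1 a)]
      rw [Prod.ext_iff]
      constructor
      · rw [Prod.fst_sum]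
        exact Finset.univ_sum_single z.1
      · rw [Prod.snd_sum]
        simp
    have h2 : (∑ a : {x // x ∈ F}, j2 a (z.2 a)) = ((0 : {x // x ∈ F} → ts.X), z.2) := by
      rw [show (∑ a : {x // x ∈ F}, j2 a (z.2 a))
          = ∑ a : {x // x ∈ F}, ((0 : {x // x ∈ F} → ts.X), (Pi.single a (z.2 a) : {x // x ∈ F} → A)) from
        Finset.sum_congr rfl fun a _ => hj2 a (z.2 a)]
      rw [Prod.ext_iff]
      constructor
      · rw [Prod.fst_sum]; simp
      · rw [Prod.snd_sum]
        exact Finset.univ_sum_single z.2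
    have hz : z = (z.1, (0 : {x // x ∈ F} → A)) + ((0 : {x // x ∈ F} → ts.X), z.2) := by
      rw [Prod.mk_add_mk]; simp
    calc L z = L ((z.1, (0 : {x // x ∈ F} → A)) + ((0 : {x // x ∈ F} → ts.X), z.2)) := by rw [← hz]
      _ = L (z.1, (0 : {x // x ∈ F} → A)) + L ((0 : {x // x ∈ F} → ts.X), z.2) := map_add L _ _
      _ = L (∑ a : {x // x ∈ F}, j1 a (z.1 a)) + L (∑ a : {x // x ∈ F}, j2 a (z.2 a)) := by
          rw [h1, h2]
      _ = (∑ a : {x // x ∈ F}, L (j1 a (z.1 a)))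
            + (∑ a : {x // x ∈ F}, L (j2 a (z.2 a))) := by rw [map_sum, map_sum]
  -- apply the core lemma
  have hsys := ts.sum_eq_zero_of_system hbf hai (fun a : {x // x ∈ F} => (a : A))
    (fun a => L.comp (j1 a)) (fun a => L.comp (j2 a)) ?_
  · -- conclusion : ∑ L (j2 a a) = 0, contradiction with hret
    have hLt : L t = ∑ a : {x // x ∈ F}, L (j2 a (a : A)) := by
      rw [hdec t, hts]
      simp
    simp only [ContinuousLinearMap.coe_comp', Function.comp_apply] at hsys
    rw [← hLt] at hsys
    rw [hsys] at hret
    simp at hret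
    linarith
  · intro m
    have h0 := hL0 m
    rw [hdec (S m)] at h0
    simpa only [hS1, hS2, ContinuousLinearMap.coe_comp', Function.comp_apply] using h0

end TensorSquare

end Approx


/-- Theorem 2.4, second part: if a Banach algebra `A` is approximately
biflat and has an approximate identity, then `A` is pseudo-amenable. -/
theorem pseudoAmenable_of_approximatelyBiflat (A : Type u) [NonUnitalNormedRing A]
    [NormedSpace ℂ A] [IsScalarTower ℂ A A] [SMulCommClass ℂ A A] [CompleteSpace A]
    (ts : TensorSquare A) (hbf : ts.ApproximatelyBiflat)
    (hai : HasApproximateIdentity A) : ts.PseudoAmenable := by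
  classical
  have hex : ∀ p : Finset A × ℕ, ∃ m : ts.X, ∀ a ∈ p.1,
      ‖ts.lsmul a m - ts.rsmul a m‖ ≤ 1 / (p.2 + 1) ∧
        ‖ts.mulMap m * a - a‖ ≤ 1 / (p.2 + 1) := by
    intro p
    refine ts.exists_approx hbf hai p.1 ?_
    positivity
  choose m hm using hex
  refine ⟨Finset A × ℕ, ⟨(∅, 0)⟩, inferInstance, m, ?_, ?_⟩
  · intro a
    refine Metric.tendsto_atTop.2 fun ε hε => ?_
    obtain ⟨N, hN⟩ := exists_nat_one_div_lt hε
    refine ⟨({a}, N), fun p hp => ?_⟩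
    have ha : a ∈ p.1 := Finset.singleton_subset_iff.1 hp.1
    have hle : (1:ℝ) / (p.2 + 1) ≤ 1 / (N + 1) := by
      apply one_div_le_one_div_of_le
      · positivity
      · have : (N : ℝ) ≤ p.2 := Nat.cast_le.2 hp.2
        linarith
    rw [dist_zero_right]
    exact lt_of_le_of_lt (le_trans ((hm p a ha).1) hle) hN
  · intro a
    refine Metric.tendsto_atTop.2 fun ε hε => ?_
    obtain ⟨N, hN⟩ := exists_nat_one_div_lt hε
    refine ⟨({a}, N), fun p hp => ?_⟩
    have ha : a ∈ p.1 := Finset.singleton_subset_iff.1 hp.1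
    have hle : (1:ℝ) / (p.2 + 1) ≤ 1 / (N + 1) := by
      apply one_div_le_one_div_of_le
      · positivity
      · have : (N : ℝ) ≤ p.2 := Nat.cast_le.2 hp.2
        linarith
    rw [dist_eq_norm]
    exact lt_of_le_of_lt (le_trans ((hm p a ha).2) hle) hN
end
end

section
/- Let A be a Banach algebra containing a directed family of closed ideals {A_γ : γ ∈ Γ} such that for each γ there is a bounded homomorphic projection P_γ of A onto A_γ. Suppose each A_γ is biflat with sup_γ BF_{A_γ} < ∞, and suppose that either A has a central approximate identity contained in the union of the A_γ which is bounded in the multiplier norm of A, or ‖P_γ a − a‖ → 0 for each a ∈ A with sup_γ ‖P_γ‖ < ∞. Then A is biflat. -/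
noncomputable section

open Filter Topology ComplexConjugate

universe u

/-- `A` is biflat with a witnessing bimodule morphism of norm at most `C`
(so the biflatness constant `BF_A` is at most `C`). -/
def TensorSquare.BiflatWithBound {A : Type u} [NonUnitalNormedRing A] [NormedSpace ℂ A]
    [IsScalarTower ℂ A A] [SMulCommClass ℂ A A] [CompleteSpace A]
    (ts : TensorSquare A) (C : ℝ) : Prop :=
  ∃ θ : (ts.X →L[ℂ] ℂ) →L[ℂ] (A →L[ℂ] ℂ),
    ‖θ‖ ≤ C ∧ ts.IsBimoduleMorphism θ ∧ ∀ φ : A →L[ℂ] ℂ, θ (ts.piStar φ) = φ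

set_option linter.unusedSectionVars false
namespace ProjTensor

variable {E F : Type u} [NormedAddCommGroup E] [NormedSpace ℂ E]
  [NormedAddCommGroup F] [NormedSpace ℂ F] (pt : ProjTensor E F)

lemma ext_tmul {W : Type u} [NormedAddCommGroup W] [NormedSpace ℂ W]
    {f g : pt.X →L[ℂ] W} (h : ∀ e f', f (pt.tmul e f') = g (pt.tmul e f')) : f = g := by
  apply ContinuousLinearMap.ext_on pt.dense_span
  rintro x ⟨p, rfl⟩
  exact h p.1 p.2

end ProjTensor

namespace TensorSquare

variable {A : Type u} [NonUnitalNormedRing A] [NormedSpace ℂ A]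
  [IsScalarTower ℂ A A] [SMulCommClass ℂ A A] [CompleteSpace A] (ts : TensorSquare A)

lemma rsmul_add' (a b : A) : ts.rsmul (a + b) = ts.rsmul a + ts.rsmul b := by
  apply ts.toProjTensor.ext_tmul
  intro e f
  rw [ContinuousLinearMap.add_apply, ts.rsmul_tmul, ts.rsmul_tmul, ts.rsmul_tmul,
    mul_add, map_add]

lemma lsmul_add' (a b : A) : ts.lsmul (a + b) = ts.lsmul a + ts.lsmul b := by
  apply ts.toProjTensor.ext_tmul
  intro e f
  rw [ContinuousLinearMap.add_apply, ts.lsmul_tmul, ts.lsmul_tmul, ts.lsmul_tmul,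
    add_mul, map_add, ContinuousLinearMap.add_apply]

lemma norm_rsmul_le' (a : A) : ‖ts.rsmul a‖ ≤ ‖a‖ :=
  ContinuousLinearMap.opNorm_le_bound _ (norm_nonneg a) (ts.rsmul_norm_le a)

lemma norm_lsmul_le' (a : A) : ‖ts.lsmul a‖ ≤ ‖a‖ :=
  ContinuousLinearMap.opNorm_le_bound _ (norm_nonneg a) (ts.lsmul_norm_le a)

end TensorSquare

theorem TensorSquare.biflat_of_approx {A : Type u} [NonUnitalNormedRing A] [NormedSpace ℂ A]
    [IsScalarTower ℂ A A] [SMulCommClass ℂ A A] [CompleteSpace A] (tsA : TensorSquare A)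
    {ι : Type u} (F : Filter ι) (hF : F.NeBot)
    (Θ : ι → (tsA.X →L[ℂ] ℂ) → A → ℂ) (K : ℝ) (hK : 0 ≤ K)
    (hbound : ∀ i ψ a, ‖Θ i ψ a‖ ≤ K * ‖ψ‖ * ‖a‖)
    (haddψ : ∀ i ψ₁ ψ₂ a, Θ i (ψ₁ + ψ₂) a = Θ i ψ₁ a + Θ i ψ₂ a)
    (hsmulψ : ∀ i (c : ℂ) ψ a, Θ i (c • ψ) a = c * Θ i ψ a)
    (hadda : ∀ i ψ a₁ a₂, Θ i ψ (a₁ + a₂) = Θ i ψ a₁ + Θ i ψ a₂)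
    (hsmula : ∀ i ψ (c : ℂ) a, Θ i ψ (c • a) = c * Θ i ψ a)
    (hr : ∀ (a : A) ψ x, Tendsto (fun i => Θ i (ψ.comp (tsA.rsmul a)) x - Θ i ψ (x * a)) F (𝓝 0))
    (hl : ∀ (a : A) ψ x, Tendsto (fun i => Θ i (ψ.comp (tsA.lsmul a)) x - Θ i ψ (a * x)) F (𝓝 0))
    (hid : ∀ (φ : A →L[ℂ] ℂ) a, Tendsto (fun i => Θ i (tsA.piStar φ) a) F (𝓝 (φ a))) :
    tsA.Biflat := by
  haveI := hF
  set U : Ultrafilter ι := Ultrafilter.of F with hU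
  have hUF : (U : Filter ι) ≤ F := Ultrafilter.of_le F
  have hex : ∀ ψ a, ∃ c : ℂ, Tendsto (fun i => Θ i ψ a) (U : Filter ι) (𝓝 c) := by
    intro ψ a
    have hcpt : IsCompact (Metric.closedBall (0 : ℂ) (K * ‖ψ‖ * ‖a‖)) :=
      isCompact_closedBall _ _
    have hmem : ∀ i, Θ i ψ a ∈ Metric.closedBall (0 : ℂ) (K * ‖ψ‖ * ‖a‖) := fun i => by
      simpa [Metric.mem_closedBall, dist_eq_norm] using hbound i ψ a
    have hle : ↑(U.map fun i => Θ i ψ a) ≤ Filter.principal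
        (Metric.closedBall (0 : ℂ) (K * ‖ψ‖ * ‖a‖)) := by
      rw [Ultrafilter.coe_map]
      exact Filter.tendsto_principal.2 (Filter.Eventually.of_forall hmem)
    obtain ⟨c, -, hc⟩ := hcpt.ultrafilter_le_nhds _ hle
    exact ⟨c, by rwa [Ultrafilter.coe_map] at hc⟩
  choose L hL using hex
  have hLadd : ∀ ψ a₁ a₂, L ψ (a₁ + a₂) = L ψ a₁ + L ψ a₂ := fun ψ a₁ a₂ =>
    tendsto_nhds_unique (hL ψ (a₁ + a₂))
      (by simpa only [← hadda] using (hL ψ a₁).add (hL ψ a₂))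
  have hLsmul : ∀ ψ (c : ℂ) a, L ψ (c • a) = c * L ψ a := fun ψ c a =>
    tendsto_nhds_unique (hL ψ (c • a))
      (by simpa only [← hsmula] using (hL ψ a).const_mul c)
  have hLaddψ : ∀ ψ₁ ψ₂ a, L (ψ₁ + ψ₂) a = L ψ₁ a + L ψ₂ a := fun ψ₁ ψ₂ a =>
    tendsto_nhds_unique (hL (ψ₁ + ψ₂) a)
      (by simpa only [← haddψ] using (hL ψ₁ a).add (hL ψ₂ a))
  have hLsmulψ : ∀ (c : ℂ) ψ a, L (c • ψ) a = c * L ψ a := fun c ψ a =>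
    tendsto_nhds_unique (hL (c • ψ) a)
      (by simpa only [← hsmulψ] using (hL ψ a).const_mul c)
  have hLbnd : ∀ ψ a, ‖L ψ a‖ ≤ (K * ‖ψ‖) * ‖a‖ := fun ψ a =>
    le_of_tendsto (hL ψ a).norm
      (Filter.Eventually.of_forall fun i => by
        simpa [mul_assoc] using hbound i ψ a)
  let Lin : (tsA.X →L[ℂ] ℂ) → (A →L[ℂ] ℂ) := fun ψ =>
    LinearMap.mkContinuous
      { toFun := L ψ
        map_add' := hLadd ψ
        map_smul' := fun c a => by simpa using hLsmul ψ c a } (K * ‖ψ‖) (hLbnd ψ)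
  have hLin_apply : ∀ ψ a, Lin ψ a = L ψ a := fun _ _ => rfl
  let θ : (tsA.X →L[ℂ] ℂ) →L[ℂ] (A →L[ℂ] ℂ) :=
    LinearMap.mkContinuous
      { toFun := Lin
        map_add' := fun ψ₁ ψ₂ => by
          ext a; simpa [hLin_apply] using hLaddψ ψ₁ ψ₂ a
        map_smul' := fun c ψ => by
          ext a; simpa [hLin_apply] using hLsmulψ c ψ a } K
      (fun ψ => LinearMap.mkContinuous_norm_le _ (by positivity) (hLbnd ψ))
  have hθ_apply : ∀ ψ a, θ ψ a = L ψ a := fun _ _ => rfl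
  refine ⟨θ, fun a ψ => ⟨?_, ?_⟩, fun φ => ?_⟩
  · ext x
    have h1 := hL (ψ.comp (tsA.rsmul a)) x
    have h2 := hL ψ (x * a)
    have h3 : Tendsto (fun i => Θ i (ψ.comp (tsA.rsmul a)) x - Θ i ψ (x * a))
        (U : Filter ι) (𝓝 (L (ψ.comp (tsA.rsmul a)) x - L ψ (x * a))) := h1.sub h2
    have h4 := (hr a ψ x).mono_left hUF
    have h5 := tendsto_nhds_unique h3 h4
    have : L (ψ.comp (tsA.rsmul a)) x = L ψ (x * a) := by
      have := sub_eq_zero.mp h5; exact this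
    simpa [hθ_apply, ContinuousLinearMap.comp_apply, rmulOp,
      ContinuousLinearMap.flip_apply] using this
  · ext x
    have h3 : Tendsto (fun i => Θ i (ψ.comp (tsA.lsmul a)) x - Θ i ψ (a * x))
        (U : Filter ι) (𝓝 (L (ψ.comp (tsA.lsmul a)) x - L ψ (a * x))) :=
      (hL _ x).sub (hL ψ (a * x))
    have h5 := tendsto_nhds_unique h3 ((hl a ψ x).mono_left hUF)
    have : L (ψ.comp (tsA.lsmul a)) x = L ψ (a * x) := sub_eq_zero.mp h5
    simpa [hθ_apply, ContinuousLinearMap.comp_apply, lmulOp] using this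
  · ext a
    have := tendsto_nhds_unique (hL (tsA.piStar φ) a) ((hid φ a).mono_left hUF)
    simpa [hθ_apply] using this

set_option maxHeartbeats 2000000

/-- Proposition 2.7(b): let `A` be a Banach algebra containing a directed
family of closed ideals `{A_γ}` (realized as isometrically embedded Banach algebras `B γ`)
with bounded homomorphic projections `P γ : A → A_γ`.  Suppose each `A_γ` is biflat with
`sup_γ BF_{A_γ} < ∞`, and either `A` has a central approximate identity contained in
`⋃ γ, A_γ` bounded in the multiplier norm of `A`, or `‖P γ a - a‖ → 0` for each `a ∈ A` with
`sup_γ ‖P γ‖ < ∞`.  Then `A` is biflat. -/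
theorem directedUnion_biflat
    (A : Type u) [NonUnitalNormedRing A] [NormedSpace ℂ A] [IsScalarTower ℂ A A]
    [SMulCommClass ℂ A A] [CompleteSpace A] (tsA : TensorSquare A)
    (Γ : Type u) (B : Γ → Type u) [∀ γ, NonUnitalNormedRing (B γ)]
    [∀ γ, NormedSpace ℂ (B γ)] [∀ γ, IsScalarTower ℂ (B γ) (B γ)]
    [∀ γ, SMulCommClass ℂ (B γ) (B γ)] [∀ γ, CompleteSpace (B γ)]
    (j : ∀ γ, B γ →L[ℂ] A)
    (hj_isometry : ∀ (γ) (b : B γ), ‖j γ b‖ = ‖b‖)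
    (hj_mul : ∀ (γ) (b c : B γ), j γ (b * c) = j γ b * j γ c)
    (hj_ideal : ∀ (γ) (a : A) (b : B γ),
      a * j γ b ∈ Set.range (j γ) ∧ j γ b * a ∈ Set.range (j γ))
    (hdirected : ∀ γ₁ γ₂ : Γ, ∃ γ₃, Set.range (j γ₁) ∪ Set.range (j γ₂) ⊆ Set.range (j γ₃))
    (P : Γ → (A →L[ℂ] A))
    (hP_mul : ∀ (γ) (a b : A), P γ (a * b) = P γ a * P γ b)
    (hP_range : ∀ γ, Set.range (P γ) = Set.range (j γ))
    (hP_proj : ∀ (γ) (b : B γ), P γ (j γ b) = j γ b)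
    (tsB : ∀ γ, TensorSquare (B γ))
    (hbiflat : ∃ C : ℝ, ∀ γ, (tsB γ).BiflatWithBound C)
    (hcase :
      (∃ (ι : Type u) (ne : Nonempty ι) (sl : SemilatticeSup ι) (e : ι → A) (M : ℝ),
        letI := ne
        letI := sl
        (∀ i, e i ∈ ⋃ γ, Set.range (j γ)) ∧ (∀ (i) (a : A), e i * a = a * e i) ∧
          (∀ (i) (a : A), ‖e i * a‖ ≤ M * ‖a‖) ∧
          ∀ a : A, Tendsto (fun i => e i * a) atTop (𝓝 a) ∧
            Tendsto (fun i => a * e i) atTop (𝓝 a)) ∨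
      ((∀ a : A, ∀ ε > (0 : ℝ), ∃ γ, ∀ γ',
        Set.range (j γ) ⊆ Set.range (j γ') → ‖P γ' a - a‖ < ε) ∧
        ∃ M : ℝ, ∀ γ, ‖P γ‖ ≤ M)) :
    tsA.Biflat := by
  classical
  obtain ⟨C, hC⟩ := hbiflat
  choose θγ hθn hθb hθi using hC
  -- the injections are injective
  have hj_inj : ∀ γ, Function.Injective (j γ) := by
    intro γ b c h
    have h2 : ‖b - c‖ = 0 := by
      rw [← hj_isometry γ (b - c), map_sub, h, sub_self, norm_zero]
    exact sub_eq_zero.1 (norm_eq_zero.1 h2)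
  -- the canonical maps T γ : (B γ) ⊗̂ (B γ) → A ⊗̂ A
  have hlift : ∀ γ, ∃ Lm : (tsB γ).X →L[ℂ] tsA.X, ‖Lm‖ ≤ 1 ∧
      ∀ b c : B γ, Lm ((tsB γ).tmul b c) = tsA.tmul (j γ b) (j γ c) := by
    intro γ
    let bil : B γ →L[ℂ] B γ →L[ℂ] tsA.X := (((tsA.tmul).comp (j γ)).flip.comp (j γ)).flip
    have hbil : ∀ b c : B γ, bil b c = tsA.tmul (j γ b) (j γ c) := fun b c => rfl
    have hbiln : ‖bil‖ ≤ 1 := by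
      refine ContinuousLinearMap.opNorm_le_bound _ zero_le_one (fun b => ?_)
      refine ContinuousLinearMap.opNorm_le_bound _ (by simpa using norm_nonneg b) (fun c => ?_)
      rw [hbil]
      calc ‖tsA.tmul (j γ b) (j γ c)‖ ≤ ‖j γ b‖ * ‖j γ c‖ := tsA.norm_tmul_le _ _
        _ = ‖b‖ * ‖c‖ := by rw [hj_isometry, hj_isometry]
        _ = 1 * ‖b‖ * ‖c‖ := by ring
    obtain ⟨Lm, h1, h2⟩ := (tsB γ).lift tsA.X bil
    exact ⟨Lm, h1.trans hbiln, fun b c => by rw [h2, hbil]⟩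
  choose T hT1 hTtmul using hlift
  -- key structural identities
  have hmulT : ∀ γ, tsA.mulMap.comp (T γ) = (j γ).comp (tsB γ).mulMap := by
    intro γ
    apply (tsB γ).toProjTensor.ext_tmul
    intro b c
    rw [ContinuousLinearMap.comp_apply, ContinuousLinearMap.comp_apply, hTtmul,
      tsA.mulMap_tmul, (tsB γ).mulMap_tmul, hj_mul]
  have hrsT : ∀ γ (v : B γ), (T γ).comp ((tsB γ).rsmul v) = (tsA.rsmul (j γ v)).comp (T γ) := by
    intro γ v
    apply (tsB γ).toProjTensor.ext_tmul
    intro b c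
    rw [ContinuousLinearMap.comp_apply, ContinuousLinearMap.comp_apply,
      (tsB γ).rsmul_tmul, hTtmul, hTtmul, tsA.rsmul_tmul, hj_mul]
  have hlsT : ∀ γ (v : B γ), (T γ).comp ((tsB γ).lsmul v) = (tsA.lsmul (j γ v)).comp (T γ) := by
    intro γ v
    apply (tsB γ).toProjTensor.ext_tmul
    intro b c
    rw [ContinuousLinearMap.comp_apply, ContinuousLinearMap.comp_apply,
      (tsB γ).lsmul_tmul, hTtmul, hTtmul, tsA.lsmul_tmul, hj_mul]
  -- norm estimates
  have hcomp1 : ∀ γ (ψ : tsA.X →L[ℂ] ℂ), ‖ψ.comp (T γ)‖ ≤ ‖ψ‖ := by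
    intro γ ψ
    calc ‖ψ.comp (T γ)‖ ≤ ‖ψ‖ * ‖T γ‖ := ContinuousLinearMap.opNorm_comp_le _ _
      _ ≤ ‖ψ‖ * 1 := mul_le_mul_of_nonneg_left (hT1 γ) (norm_nonneg _)
      _ = ‖ψ‖ := mul_one _
  have hcomp3 : ∀ γ (ψ : tsA.X →L[ℂ] ℂ) (S : tsA.X →L[ℂ] tsA.X),
      ‖(ψ.comp S).comp (T γ)‖ ≤ ‖ψ‖ * ‖S‖ := by
    intro γ ψ S
    calc ‖(ψ.comp S).comp (T γ)‖ ≤ ‖ψ.comp S‖ * ‖T γ‖ :=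
          ContinuousLinearMap.opNorm_comp_le _ _
      _ ≤ ‖ψ.comp S‖ * 1 := mul_le_mul_of_nonneg_left (hT1 γ) (norm_nonneg _)
      _ = ‖ψ.comp S‖ := mul_one _
      _ ≤ ‖ψ‖ * ‖S‖ := ContinuousLinearMap.opNorm_comp_le _ _
  have hθev : ∀ γ (χ : (tsB γ).X →L[ℂ] ℂ) (v : B γ), ‖θγ γ χ v‖ ≤ C * ‖χ‖ * ‖v‖ := by
    intro γ χ v
    calc ‖θγ γ χ v‖ ≤ ‖θγ γ χ‖ * ‖v‖ := ContinuousLinearMap.le_opNorm _ _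
      _ ≤ (‖θγ γ‖ * ‖χ‖) * ‖v‖ :=
          mul_le_mul_of_nonneg_right (ContinuousLinearMap.le_opNorm _ _) (norm_nonneg _)
      _ ≤ (C * ‖χ‖) * ‖v‖ := by
          have := mul_le_mul_of_nonneg_right (hθn γ) (norm_nonneg χ)
          exact mul_le_mul_of_nonneg_right this (norm_nonneg v)
  rcases hcase with ⟨ι, ne, sl, e, M, he_mem, he_cent, he_bd, he_ai⟩ | ⟨happrox, M, hM⟩
  · -- Case 1 : central approximate identity
    letI := ne
    letI := sl
    obtain ⟨i₀⟩ := ne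
    have h1 : ∀ i, ∃ γ, e i ∈ Set.range (j γ) := fun i => Set.mem_iUnion.1 (he_mem i)
    choose g hg using h1
    choose u hu using hg
    haveI : Nonempty Γ := ⟨g i₀⟩
    have hC0 : 0 ≤ C := le_trans (norm_nonneg (θγ (g i₀))) (hθn (g i₀))
    set M' : ℝ := max M 0 with hM'def
    have hM'0 : 0 ≤ M' := le_max_right _ _
    have he_bd' : ∀ i (a : A), ‖e i * a‖ ≤ M' * ‖a‖ := fun i a =>
      (he_bd i a).trans (mul_le_mul_of_nonneg_right (le_max_left _ _) (norm_nonneg _))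
    -- the maps R i : A → B (g i), a ↦ e i * a
    have hRex : ∀ i (a : A), ∃ b : B (g i), j (g i) b = e i * a := by
      intro i a
      obtain ⟨b, hb⟩ := (hj_ideal (g i) a (u i)).1
      exact ⟨b, by rw [hb, hu, ← he_cent]⟩
    choose R hR using hRex
    have hR_add : ∀ i (a a' : A), R i (a + a') = R i a + R i a' := fun i a a' =>
      hj_inj _ (by rw [map_add, hR, hR, hR, mul_add])
    have hR_smul : ∀ i (c : ℂ) (a : A), R i (c • a) = c • R i a := fun i c a =>
      hj_inj _ (by rw [map_smul, hR, hR, mul_smul_comm])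
    have hR_sub : ∀ i (a a' : A), R i (a - a') = R i a - R i a' := fun i a a' =>
      hj_inj _ (by rw [map_sub, hR, hR, hR, mul_sub])
    have hR_norm : ∀ i (a : A), ‖R i a‖ ≤ M' * ‖a‖ := by
      intro i a
      rw [← hj_isometry (g i), hR]
      exact he_bd' i a
    have hRR_r : ∀ i (x a : A), R i x * R i a = R i (e i * (x * a)) := by
      intro i x a
      apply hj_inj (g i)
      rw [hj_mul, hR, hR, hR, mul_assoc, ← mul_assoc x (e i) a, ← he_cent i x,
        mul_assoc (e i) x a]
    have hRR_l : ∀ i (a x : A), R i a * R i x = R i (e i * (a * x)) := by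
      intro i a x
      apply hj_inj (g i)
      rw [hj_mul, hR, hR, hR, mul_assoc, ← mul_assoc a (e i) x, ← he_cent i a,
        mul_assoc (e i) a x]
    -- approximating maps
    set Θ : ι → (tsA.X →L[ℂ] ℂ) → A → ℂ :=
      fun i ψ a => θγ (g i) (ψ.comp (T (g i))) (R i a) with hΘdef
    refine tsA.biflat_of_approx (atTop : Filter ι) atTop_neBot Θ (C * M')
      (mul_nonneg hC0 hM'0) ?_ ?_ ?_ ?_ ?_ ?_ ?_ ?_
    · intro i ψ a
      calc ‖Θ i ψ a‖ ≤ C * ‖ψ.comp (T (g i))‖ * ‖R i a‖ := hθev (g i) _ _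
        _ ≤ C * ‖ψ‖ * (M' * ‖a‖) := by
            have h1 := mul_le_mul_of_nonneg_left (hcomp1 (g i) ψ) hC0
            exact mul_le_mul h1 (hR_norm i a) (norm_nonneg _)
              (mul_nonneg hC0 (norm_nonneg _))
        _ = C * M' * ‖ψ‖ * ‖a‖ := by ring
    · intro i ψ₁ ψ₂ a
      simp only [hΘdef, ContinuousLinearMap.add_comp, map_add, ContinuousLinearMap.add_apply]
    · intro i c ψ a
      simp only [hΘdef, ContinuousLinearMap.smul_comp, map_smul, ContinuousLinearMap.smul_apply,
        smul_eq_mul]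
    · intro i ψ a₁ a₂
      simp only [hΘdef, hR_add, map_add]
    · intro i ψ c a
      simp only [hΘdef, hR_smul, map_smul, smul_eq_mul]
    · -- rsmul
      intro a ψ x
      have key : ∀ i, Θ i (ψ.comp (tsA.rsmul a)) x - Θ i ψ (x * a)
          = θγ (g i) ((ψ.comp (tsA.rsmul (a - e i * a))).comp (T (g i))) (R i x)
            + θγ (g i) (ψ.comp (T (g i))) (R i (e i * (x * a) - x * a)) := by
        intro i
        have e0 : (T (g i)).comp ((tsB (g i)).rsmul (R i a))
            = (tsA.rsmul (e i * a)).comp (T (g i)) := by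
          rw [hrsT (g i) (R i a), hR]
        have e0' : (ψ.comp (T (g i))).comp ((tsB (g i)).rsmul (R i a))
            = (ψ.comp (tsA.rsmul (e i * a))).comp (T (g i)) := by
          rw [ContinuousLinearMap.comp_assoc, e0, ← ContinuousLinearMap.comp_assoc]
        have e1 : (ψ.comp (tsA.rsmul a)).comp (T (g i))
            = (ψ.comp (tsA.rsmul (a - e i * a))).comp (T (g i))
              + (ψ.comp (T (g i))).comp ((tsB (g i)).rsmul (R i a)) := by
          rw [e0', ← ContinuousLinearMap.add_comp, ← ContinuousLinearMap.comp_add,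
            ← tsA.rsmul_add', sub_add_cancel]
        have e2 : θγ (g i) ((ψ.comp (T (g i))).comp ((tsB (g i)).rsmul (R i a))) (R i x)
            = θγ (g i) (ψ.comp (T (g i))) (R i (e i * (x * a))) := by
          rw [(hθb (g i) (R i a) (ψ.comp (T (g i)))).1]
          show θγ (g i) (ψ.comp (T (g i))) (rmulOp (B (g i)) (R i a) (R i x)) = _
          have : rmulOp (B (g i)) (R i a) (R i x) = R i (e i * (x * a)) := by
            show R i x * R i a = _
            exact hRR_r i x a
          rw [this]
        have e3 : θγ (g i) (ψ.comp (T (g i))) (R i (e i * (x * a)))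
            - θγ (g i) (ψ.comp (T (g i))) (R i (x * a))
            = θγ (g i) (ψ.comp (T (g i))) (R i (e i * (x * a) - x * a)) := by
          rw [hR_sub, map_sub]
        rw [hΘdef]
        simp only
        rw [e1, map_add, ContinuousLinearMap.add_apply, e2, ← e3]
        ring
      have hb1 : ∀ i, ‖θγ (g i) ((ψ.comp (tsA.rsmul (a - e i * a))).comp (T (g i))) (R i x)‖
          ≤ (C * ‖ψ‖ * (M' * ‖x‖)) * ‖a - e i * a‖ := by
        intro i
        calc ‖θγ (g i) ((ψ.comp (tsA.rsmul (a - e i * a))).comp (T (g i))) (R i x)‖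
            ≤ C * ‖(ψ.comp (tsA.rsmul (a - e i * a))).comp (T (g i))‖ * ‖R i x‖ :=
              hθev (g i) _ _
          _ ≤ C * (‖ψ‖ * ‖a - e i * a‖) * (M' * ‖x‖) := by
              have h1 : ‖(ψ.comp (tsA.rsmul (a - e i * a))).comp (T (g i))‖
                  ≤ ‖ψ‖ * ‖a - e i * a‖ := by
                refine (hcomp3 (g i) ψ _).trans ?_
                exact mul_le_mul_of_nonneg_left (tsA.norm_rsmul_le' _) (norm_nonneg ψ)
              exact mul_le_mul (mul_le_mul_of_nonneg_left h1 hC0) (hR_norm i x)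
                (norm_nonneg _) (by positivity)
          _ = (C * ‖ψ‖ * (M' * ‖x‖)) * ‖a - e i * a‖ := by ring
      have hb2 : ∀ i, ‖θγ (g i) (ψ.comp (T (g i))) (R i (e i * (x * a) - x * a))‖
          ≤ (C * ‖ψ‖ * M') * ‖e i * (x * a) - x * a‖ := by
        intro i
        calc ‖θγ (g i) (ψ.comp (T (g i))) (R i (e i * (x * a) - x * a))‖
            ≤ C * ‖ψ.comp (T (g i))‖ * ‖R i (e i * (x * a) - x * a)‖ := hθev (g i) _ _
          _ ≤ C * ‖ψ‖ * (M' * ‖e i * (x * a) - x * a‖) := by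
              exact mul_le_mul (mul_le_mul_of_nonneg_left (hcomp1 (g i) ψ) hC0)
                (hR_norm i _) (norm_nonneg _) (mul_nonneg hC0 (norm_nonneg _))
          _ = (C * ‖ψ‖ * M') * ‖e i * (x * a) - x * a‖ := by ring
      have ht1 : Tendsto (fun i => ‖a - e i * a‖) atTop (𝓝 0) := by
        have := ((he_ai a).1).const_sub a
        simpa using this.norm
      have ht2 : Tendsto (fun i => ‖e i * (x * a) - x * a‖) atTop (𝓝 0) := by
        have := ((he_ai (x * a)).1).sub_const (x * a)
        simpa using this.norm
      have hg1 := squeeze_zero_norm hb1 (by simpa using ht1.const_mul (C * ‖ψ‖ * (M' * ‖x‖)))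
      have hg2 := squeeze_zero_norm hb2 (by simpa using ht2.const_mul (C * ‖ψ‖ * M'))
      have := hg1.add hg2
      rw [add_zero] at this
      exact this.congr (fun i => (key i).symm)
    · -- lsmul
      intro a ψ x
      have key : ∀ i, Θ i (ψ.comp (tsA.lsmul a)) x - Θ i ψ (a * x)
          = θγ (g i) ((ψ.comp (tsA.lsmul (a - e i * a))).comp (T (g i))) (R i x)
            + θγ (g i) (ψ.comp (T (g i))) (R i (e i * (a * x) - a * x)) := by
        intro i
        have e0 : (T (g i)).comp ((tsB (g i)).lsmul (R i a))
            = (tsA.lsmul (e i * a)).comp (T (g i)) := by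
          rw [hlsT (g i) (R i a), hR]
        have e0' : (ψ.comp (T (g i))).comp ((tsB (g i)).lsmul (R i a))
            = (ψ.comp (tsA.lsmul (e i * a))).comp (T (g i)) := by
          rw [ContinuousLinearMap.comp_assoc, e0, ← ContinuousLinearMap.comp_assoc]
        have e1 : (ψ.comp (tsA.lsmul a)).comp (T (g i))
            = (ψ.comp (tsA.lsmul (a - e i * a))).comp (T (g i))
              + (ψ.comp (T (g i))).comp ((tsB (g i)).lsmul (R i a)) := by
          rw [e0', ← ContinuousLinearMap.add_comp, ← ContinuousLinearMap.comp_add,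
            ← tsA.lsmul_add', sub_add_cancel]
        have e2 : θγ (g i) ((ψ.comp (T (g i))).comp ((tsB (g i)).lsmul (R i a))) (R i x)
            = θγ (g i) (ψ.comp (T (g i))) (R i (e i * (a * x))) := by
          rw [(hθb (g i) (R i a) (ψ.comp (T (g i)))).2]
          show θγ (g i) (ψ.comp (T (g i))) (lmulOp (B (g i)) (R i a) (R i x)) = _
          have : lmulOp (B (g i)) (R i a) (R i x) = R i (e i * (a * x)) := by
            show R i a * R i x = _
            exact hRR_l i a x
          rw [this]
        have e3 : θγ (g i) (ψ.comp (T (g i))) (R i (e i * (a * x)))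
            - θγ (g i) (ψ.comp (T (g i))) (R i (a * x))
            = θγ (g i) (ψ.comp (T (g i))) (R i (e i * (a * x) - a * x)) := by
          rw [hR_sub, map_sub]
        rw [hΘdef]
        simp only
        rw [e1, map_add, ContinuousLinearMap.add_apply, e2, ← e3]
        ring
      have hb1 : ∀ i, ‖θγ (g i) ((ψ.comp (tsA.lsmul (a - e i * a))).comp (T (g i))) (R i x)‖
          ≤ (C * ‖ψ‖ * (M' * ‖x‖)) * ‖a - e i * a‖ := by
        intro i
        calc ‖θγ (g i) ((ψ.comp (tsA.lsmul (a - e i * a))).comp (T (g i))) (R i x)‖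
            ≤ C * ‖(ψ.comp (tsA.lsmul (a - e i * a))).comp (T (g i))‖ * ‖R i x‖ :=
              hθev (g i) _ _
          _ ≤ C * (‖ψ‖ * ‖a - e i * a‖) * (M' * ‖x‖) := by
              have h1 : ‖(ψ.comp (tsA.lsmul (a - e i * a))).comp (T (g i))‖
                  ≤ ‖ψ‖ * ‖a - e i * a‖ := by
                refine (hcomp3 (g i) ψ _).trans ?_
                exact mul_le_mul_of_nonneg_left (tsA.norm_lsmul_le' _) (norm_nonneg ψ)
              exact mul_le_mul (mul_le_mul_of_nonneg_left h1 hC0) (hR_norm i x)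
                (norm_nonneg _) (by positivity)
          _ = (C * ‖ψ‖ * (M' * ‖x‖)) * ‖a - e i * a‖ := by ring
      have hb2 : ∀ i, ‖θγ (g i) (ψ.comp (T (g i))) (R i (e i * (a * x) - a * x))‖
          ≤ (C * ‖ψ‖ * M') * ‖e i * (a * x) - a * x‖ := by
        intro i
        calc ‖θγ (g i) (ψ.comp (T (g i))) (R i (e i * (a * x) - a * x))‖
            ≤ C * ‖ψ.comp (T (g i))‖ * ‖R i (e i * (a * x) - a * x)‖ := hθev (g i) _ _
          _ ≤ C * ‖ψ‖ * (M' * ‖e i * (a * x) - a * x‖) := by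
              exact mul_le_mul (mul_le_mul_of_nonneg_left (hcomp1 (g i) ψ) hC0)
                (hR_norm i _) (norm_nonneg _) (mul_nonneg hC0 (norm_nonneg _))
          _ = (C * ‖ψ‖ * M') * ‖e i * (a * x) - a * x‖ := by ring
      have ht1 : Tendsto (fun i => ‖a - e i * a‖) atTop (𝓝 0) := by
        have := ((he_ai a).1).const_sub a
        simpa using this.norm
      have ht2 : Tendsto (fun i => ‖e i * (a * x) - a * x‖) atTop (𝓝 0) := by
        have := ((he_ai (a * x)).1).sub_const (a * x)
        simpa using this.norm
      have hg1 := squeeze_zero_norm hb1 (by simpa using ht1.const_mul (C * ‖ψ‖ * (M' * ‖x‖)))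
      have hg2 := squeeze_zero_norm hb2 (by simpa using ht2.const_mul (C * ‖ψ‖ * M'))
      have := hg1.add hg2
      rw [add_zero] at this
      exact this.congr (fun i => (key i).symm)
    · -- identity
      intro φ a
      have key : ∀ i, Θ i (tsA.piStar φ) a = φ (e i * a) := by
        intro i
        have e1 : (tsA.piStar φ).comp (T (g i)) = (tsB (g i)).piStar (φ.comp (j (g i))) := by
          show (φ.comp tsA.mulMap).comp (T (g i)) = (φ.comp (j (g i))).comp (tsB (g i)).mulMap
          rw [ContinuousLinearMap.comp_assoc, hmulT, ← ContinuousLinearMap.comp_assoc]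
        rw [hΘdef]
        simp only
        rw [e1, hθi (g i) (φ.comp (j (g i))), ContinuousLinearMap.comp_apply, hR]
      have : Tendsto (fun i => φ (e i * a)) atTop (𝓝 (φ a)) :=
        (φ.continuous.tendsto a).comp ((he_ai a).1)
      exact this.congr (fun i => (key i).symm)
  · -- Case 2 : convergent projections
    obtain ⟨γ₀, -⟩ := happrox 0 1 one_pos
    haveI : Nonempty Γ := ⟨γ₀⟩
    have hC0 : 0 ≤ C := le_trans (norm_nonneg (θγ γ₀)) (hθn γ₀)
    set M' : ℝ := max M 0 with hM'def
    have hM'0 : 0 ≤ M' := le_max_right _ _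
    have hM' : ∀ γ, ‖P γ‖ ≤ M' := fun γ => (hM γ).trans (le_max_left _ _)
    -- Q γ : A → B γ realizing P γ
    have hQex : ∀ γ (a : A), ∃ b : B γ, j γ b = P γ a := by
      intro γ a
      have : P γ a ∈ Set.range (j γ) := (hP_range γ) ▸ Set.mem_range_self a
      exact this
    choose Q hQ using hQex
    have hQ_add : ∀ γ (a a' : A), Q γ (a + a') = Q γ a + Q γ a' := fun γ a a' =>
      hj_inj γ (by rw [map_add, hQ, hQ, hQ, map_add])
    have hQ_smul : ∀ γ (c : ℂ) (a : A), Q γ (c • a) = c • Q γ a := fun γ c a =>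
      hj_inj γ (by rw [map_smul, hQ, hQ, map_smul])
    have hQ_mul : ∀ γ (x a : A), Q γ (x * a) = Q γ x * Q γ a := fun γ x a =>
      hj_inj γ (by rw [hj_mul, hQ, hQ, hQ, hP_mul])
    have hQ_norm : ∀ γ (a : A), ‖Q γ a‖ ≤ M' * ‖a‖ := by
      intro γ a
      rw [← hj_isometry γ, hQ]
      exact ((P γ).le_opNorm a).trans (mul_le_mul_of_nonneg_right (hM' γ) (norm_nonneg a))
    -- the filter of eventual ideals
    set F : Filter Γ := ⨅ γ₀, Filter.principal {γ | Set.range (j γ₀) ⊆ Set.range (j γ)}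
      with hFdef
    have hFne : F.NeBot := by
      refine Filter.iInf_neBot_of_directed' ?_ ?_
      · intro γ₁ γ₂
        obtain ⟨γ₃, h₃⟩ := hdirected γ₁ γ₂
        refine ⟨γ₃, ?_, ?_⟩ <;> refine Filter.principal_mono.2 (fun γ hγ => ?_)
        · exact subset_trans (subset_trans Set.subset_union_left h₃) hγ
        · exact subset_trans (subset_trans Set.subset_union_right h₃) hγ
      · intro γ
        exact Filter.principal_neBot_iff.2 ⟨γ, fun x hx => hx⟩
    have hmemF : ∀ γ₁, {γ | Set.range (j γ₁) ⊆ Set.range (j γ)} ∈ F :=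
      fun γ₁ => (iInf_le (fun γ₁ => Filter.principal {γ | Set.range (j γ₁) ⊆ Set.range (j γ)})
        γ₁) (Filter.mem_principal_self _)
    have hPtend : ∀ a : A, Tendsto (fun γ => P γ a) F (𝓝 a) := by
      intro a
      rw [Metric.tendsto_nhds]
      intro ε hε
      obtain ⟨γ₁, hγ₁⟩ := happrox a ε hε
      exact Filter.eventually_of_mem (hmemF γ₁) (fun γ hγ => by
        rw [dist_eq_norm]; exact hγ₁ γ hγ)
    have hPtend0 : ∀ a : A, Tendsto (fun γ => ‖a - P γ a‖) F (𝓝 0) := by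
      intro a
      have h1 : Tendsto (fun γ => a - P γ a) F (𝓝 0) := by
        simpa using (hPtend a).const_sub a
      simpa using h1.norm
    -- the approximating maps
    set Θ : Γ → (tsA.X →L[ℂ] ℂ) → A → ℂ :=
      fun γ ψ a => θγ γ (ψ.comp (T γ)) (Q γ a) with hΘdef
    refine tsA.biflat_of_approx F hFne Θ (C * M') (mul_nonneg hC0 hM'0) ?_ ?_ ?_ ?_ ?_ ?_ ?_ ?_
    · -- bound
      intro γ ψ a
      calc ‖Θ γ ψ a‖ ≤ C * ‖ψ.comp (T γ)‖ * ‖Q γ a‖ := hθev γ _ _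
        _ ≤ C * ‖ψ‖ * (M' * ‖a‖) := by
            have h1 := mul_le_mul_of_nonneg_left (hcomp1 γ ψ) hC0
            exact mul_le_mul h1 (hQ_norm γ a) (norm_nonneg _)
              (mul_nonneg hC0 (norm_nonneg _))
        _ = C * M' * ‖ψ‖ * ‖a‖ := by ring
    · intro γ ψ₁ ψ₂ a
      simp only [hΘdef, ContinuousLinearMap.add_comp, map_add, ContinuousLinearMap.add_apply]
    · intro γ c ψ a
      simp only [hΘdef, ContinuousLinearMap.smul_comp, map_smul, ContinuousLinearMap.smul_apply,
        smul_eq_mul]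
    · intro γ ψ a₁ a₂
      simp only [hΘdef, hQ_add, map_add]
    · intro γ ψ c a
      simp only [hΘdef, hQ_smul, map_smul, smul_eq_mul]
    · -- rsmul
      intro a ψ x
      have key : ∀ γ, Θ γ (ψ.comp (tsA.rsmul a)) x - Θ γ ψ (x * a)
          = θγ γ ((ψ.comp (tsA.rsmul (a - P γ a))).comp (T γ)) (Q γ x) := by
        intro γ
        have e0 : (T γ).comp ((tsB γ).rsmul (Q γ a)) = (tsA.rsmul (P γ a)).comp (T γ) := by
          rw [hrsT γ (Q γ a), hQ]
        have e0' : (ψ.comp (T γ)).comp ((tsB γ).rsmul (Q γ a))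
            = (ψ.comp (tsA.rsmul (P γ a))).comp (T γ) := by
          rw [ContinuousLinearMap.comp_assoc, e0, ← ContinuousLinearMap.comp_assoc]
        have e1 : (ψ.comp (tsA.rsmul a)).comp (T γ)
            = (ψ.comp (tsA.rsmul (a - P γ a))).comp (T γ)
              + (ψ.comp (T γ)).comp ((tsB γ).rsmul (Q γ a)) := by
          rw [e0', ← ContinuousLinearMap.add_comp, ← ContinuousLinearMap.comp_add,
            ← tsA.rsmul_add', sub_add_cancel]
        have e2 : θγ γ ((ψ.comp (T γ)).comp ((tsB γ).rsmul (Q γ a))) (Q γ x) = Θ γ ψ (x * a) := by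
          rw [(hθb γ (Q γ a) (ψ.comp (T γ))).1]
          show θγ γ (ψ.comp (T γ)) (rmulOp (B γ) (Q γ a) (Q γ x)) = _
          have : rmulOp (B γ) (Q γ a) (Q γ x) = Q γ (x * a) := by
            show Q γ x * Q γ a = Q γ (x * a)
            rw [hQ_mul]
          rw [this]
        rw [hΘdef] at e2 ⊢
        simp only
        rw [e1, map_add, ContinuousLinearMap.add_apply, e2]
        ring
      have hb : ∀ γ, ‖θγ γ ((ψ.comp (tsA.rsmul (a - P γ a))).comp (T γ)) (Q γ x)‖
          ≤ (C * ‖ψ‖ * (M' * ‖x‖)) * ‖a - P γ a‖ := by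
        intro γ
        calc ‖θγ γ ((ψ.comp (tsA.rsmul (a - P γ a))).comp (T γ)) (Q γ x)‖
            ≤ C * ‖(ψ.comp (tsA.rsmul (a - P γ a))).comp (T γ)‖ * ‖Q γ x‖ := hθev γ _ _
          _ ≤ C * (‖ψ‖ * ‖a - P γ a‖) * (M' * ‖x‖) := by
              have h1 : ‖(ψ.comp (tsA.rsmul (a - P γ a))).comp (T γ)‖
                  ≤ ‖ψ‖ * ‖a - P γ a‖ := by
                refine (hcomp3 γ ψ _).trans ?_
                exact mul_le_mul_of_nonneg_left (tsA.norm_rsmul_le' _) (norm_nonneg ψ)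
              exact mul_le_mul (mul_le_mul_of_nonneg_left h1 hC0) (hQ_norm γ x)
                (norm_nonneg _) (by positivity)
          _ = (C * ‖ψ‖ * (M' * ‖x‖)) * ‖a - P γ a‖ := by ring
      have hg : Tendsto (fun γ => (C * ‖ψ‖ * (M' * ‖x‖)) * ‖a - P γ a‖) F (𝓝 0) := by
        simpa using (hPtend0 a).const_mul (C * ‖ψ‖ * (M' * ‖x‖))
      have := squeeze_zero_norm (fun γ => hb γ) hg
      exact this.congr (fun γ => (key γ).symm)
    · -- lsmul
      intro a ψ x
      have key : ∀ γ, Θ γ (ψ.comp (tsA.lsmul a)) x - Θ γ ψ (a * x)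
          = θγ γ ((ψ.comp (tsA.lsmul (a - P γ a))).comp (T γ)) (Q γ x) := by
        intro γ
        have e0 : (T γ).comp ((tsB γ).lsmul (Q γ a)) = (tsA.lsmul (P γ a)).comp (T γ) := by
          rw [hlsT γ (Q γ a), hQ]
        have e0' : (ψ.comp (T γ)).comp ((tsB γ).lsmul (Q γ a))
            = (ψ.comp (tsA.lsmul (P γ a))).comp (T γ) := by
          rw [ContinuousLinearMap.comp_assoc, e0, ← ContinuousLinearMap.comp_assoc]
        have e1 : (ψ.comp (tsA.lsmul a)).comp (T γ)
            = (ψ.comp (tsA.lsmul (a - P γ a))).comp (T γ)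
              + (ψ.comp (T γ)).comp ((tsB γ).lsmul (Q γ a)) := by
          rw [e0', ← ContinuousLinearMap.add_comp, ← ContinuousLinearMap.comp_add,
            ← tsA.lsmul_add', sub_add_cancel]
        have e2 : θγ γ ((ψ.comp (T γ)).comp ((tsB γ).lsmul (Q γ a))) (Q γ x) = Θ γ ψ (a * x) := by
          rw [(hθb γ (Q γ a) (ψ.comp (T γ))).2]
          show θγ γ (ψ.comp (T γ)) (lmulOp (B γ) (Q γ a) (Q γ x)) = _
          have : lmulOp (B γ) (Q γ a) (Q γ x) = Q γ (a * x) := by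
            show Q γ a * Q γ x = Q γ (a * x)
            rw [hQ_mul]
          rw [this]
        rw [hΘdef] at e2 ⊢
        simp only
        rw [e1, map_add, ContinuousLinearMap.add_apply, e2]
        ring
      have hb : ∀ γ, ‖θγ γ ((ψ.comp (tsA.lsmul (a - P γ a))).comp (T γ)) (Q γ x)‖
          ≤ (C * ‖ψ‖ * (M' * ‖x‖)) * ‖a - P γ a‖ := by
        intro γ
        calc ‖θγ γ ((ψ.comp (tsA.lsmul (a - P γ a))).comp (T γ)) (Q γ x)‖
            ≤ C * ‖(ψ.comp (tsA.lsmul (a - P γ a))).comp (T γ)‖ * ‖Q γ x‖ := hθev γ _ _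
          _ ≤ C * (‖ψ‖ * ‖a - P γ a‖) * (M' * ‖x‖) := by
              have h1 : ‖(ψ.comp (tsA.lsmul (a - P γ a))).comp (T γ)‖
                  ≤ ‖ψ‖ * ‖a - P γ a‖ := by
                refine (hcomp3 γ ψ _).trans ?_
                exact mul_le_mul_of_nonneg_left (tsA.norm_lsmul_le' _) (norm_nonneg ψ)
              exact mul_le_mul (mul_le_mul_of_nonneg_left h1 hC0) (hQ_norm γ x)
                (norm_nonneg _) (by positivity)
          _ = (C * ‖ψ‖ * (M' * ‖x‖)) * ‖a - P γ a‖ := by ring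
      have hg : Tendsto (fun γ => (C * ‖ψ‖ * (M' * ‖x‖)) * ‖a - P γ a‖) F (𝓝 0) := by
        simpa using (hPtend0 a).const_mul (C * ‖ψ‖ * (M' * ‖x‖))
      have := squeeze_zero_norm (fun γ => hb γ) hg
      exact this.congr (fun γ => (key γ).symm)
    · -- identity
      intro φ a
      have key : ∀ γ, Θ γ (tsA.piStar φ) a = φ (P γ a) := by
        intro γ
        have e1 : (tsA.piStar φ).comp (T γ) = (tsB γ).piStar (φ.comp (j γ)) := by
          show (φ.comp tsA.mulMap).comp (T γ) = (φ.comp (j γ)).comp (tsB γ).mulMap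
          rw [ContinuousLinearMap.comp_assoc, hmulT, ← ContinuousLinearMap.comp_assoc]
        rw [hΘdef]
        simp only
        rw [e1, hθi γ (φ.comp (j γ)), ContinuousLinearMap.comp_apply, hQ]
      have : Tendsto (fun γ => φ (P γ a)) F (𝓝 (φ a)) :=
        (φ.continuous.tendsto a).comp (hPtend a)
      exact this.congr (fun γ => (key γ).symm)
end
end
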